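/- (Schur's Tauberian Theorem.) Suppose B(x) and C(x) are real power series such that (i) B(x) has radius of convergence strictly greater than 1, (ii) B(1) > 0, and (iii) C(x) ∈ RT1. Let A(x) := B(x)·C(x). Then a(n) ~ B(1)·c(n) as n → ∞, i.e. a(n)/(B(1)·c(n)) → 1. -/

import Mathlib

open Filter Finset


private lemma ratio_pow_bound (c : ℕ → ℝ) (r : ℝ) (hr : 1 < r) (N0 : ℕ)
    (h : ∀ n, N0 ≤ n → 0 < c n ∧ c (n - 1) ≤ r * c n ∧ c n ≤ r * c (n - 1)) :
    ∀ m n, N0 ≤ m → m ≤ n → c m ≤ r ^ (n - m) * c n ∧ c n ≤ r ^ (n - m) * c m := by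
  intro m n hm hmn
  induction n, hmn using Nat.le_induction with
  | base => simp
  | succ n hmn ih =>
    have hr0 : (0:ℝ) < r := lt_trans one_pos hr
    have hrp : (0:ℝ) ≤ r ^ (n - m) := le_of_lt (pow_pos hr0 _)
    have h1 := h (n + 1) (by omega)
    have hn1 : (n + 1) - 1 = n := by omega
    rw [hn1] at h1
    have he : (n + 1) - m = (n - m) + 1 := by omega
    constructor
    · calc c m ≤ r ^ (n - m) * c n := ih.1
        _ ≤ r ^ (n - m) * (r * c (n + 1)) :=
          mul_le_mul_of_nonneg_left h1.2.1 hrp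
        _ = r ^ ((n+1) - m) * c (n + 1) := by rw [he, pow_succ]; ring
    · calc c (n + 1) ≤ r * c n := h1.2.2
        _ ≤ r * (r ^ (n - m) * c m) := mul_le_mul_of_nonneg_left ih.2 hr0.le
        _ = r ^ ((n+1) - m) * c m := by rw [he, pow_succ]; ring

private lemma ratio_tendsto (c : ℕ → ℝ) (N0 : ℕ) (hpos : ∀ n, N0 ≤ n → 0 < c n)
    (h : Tendsto (fun n => c (n - 1) / c n) atTop (nhds 1)) (j : ℕ) :
    Tendsto (fun n => c (n - j) / c n) atTop (nhds 1) := by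
  induction j with
  | zero =>
    apply Tendsto.congr' _ (tendsto_const_nhds : Tendsto (fun _ : ℕ => (1:ℝ)) atTop (nhds 1))
    filter_upwards [eventually_ge_atTop N0] with n hn
    simp [div_self (hpos n hn).ne']
  | succ j ih =>
    have h1 : Tendsto (fun n => c (n - j - 1) / c (n - j)) atTop (nhds 1) :=
      h.comp (tendsto_sub_atTop_nat j)
    have h2 := h1.mul ih
    rw [mul_one] at h2
    apply Tendsto.congr' _ h2
    filter_upwards [eventually_ge_atTop (N0 + j)] with n hn
    have hcnj : c (n - j) ≠ 0 := (hpos (n - j) (by omega)).ne'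
    have : n - j - 1 = n - (j + 1) := by omega
    rw [this] at *
    field_simp

set_option maxHeartbeats 1000000 in
private lemma schur_key (b c : ℕ → ℝ) (q r : ℝ) (hq : 1 < q) (hr1 : 1 < r) (hrq : r < q)
    (hsumq : Summable (fun n => |b n| * q ^ n))
    (hb_abs : Summable (fun n => |b n|)) (hb : Summable b)
    (hbr : Summable (fun n => |b n| * r ^ n))
    (N0 : ℕ) (hcpos : ∀ n, N0 ≤ n → 0 < c n)
    (hub : ∀ n j, N0 ≤ n → j ≤ n - N0 → c (n - j) ≤ r ^ j * c n)
    (hlb : ∀ n, N0 ≤ n → c N0 ≤ r ^ (n - N0) * c n)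
    (hratio : Filter.Tendsto (fun n => c (n - 1) / c n) Filter.atTop (nhds 1)) :
    Filter.Tendsto (fun n => ∑ j ∈ Finset.range (n + 1), b j * (c (n - j) / c n))
      Filter.atTop (nhds (∑' n, b n)) := by
  have hq0 : (0:ℝ) < q := lt_trans one_pos hq
  have hr0 : (0:ℝ) < r := lt_trans one_pos hr1
  set D : ℕ → ℝ := fun j => |b j| * r ^ j + |b j| with hDdef
  have hD : Summable D := hbr.add hb_abs
  have hDnonneg : ∀ j, 0 ≤ D j := fun j => by
    have h1 : (0:ℝ) ≤ |b j| * r ^ j := mul_nonneg (abs_nonneg _) (pow_nonneg hr0.le _)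
    have h2 : (0:ℝ) ≤ |b j| := abs_nonneg _
    simp only [hDdef]; linarith
  have hDb : ∀ j, |b j| ≤ D j := fun j => by
    have h1 : (0:ℝ) ≤ |b j| * r ^ j := mul_nonneg (abs_nonneg _) (pow_nonneg hr0.le _)
    simp only [hDdef]; linarith
  set Sb : ℝ := ∑' n, |b n| * q ^ n with hSbdef
  have hSb0 : 0 ≤ Sb := tsum_nonneg (fun i => mul_nonneg (abs_nonneg _) (pow_nonneg hq0.le _))
  have hbj : ∀ j, |b j| * q ^ j ≤ Sb :=
    fun j => Summable.le_tsum hsumq j (fun i _ => mul_nonneg (abs_nonneg _) (pow_nonneg hq0.le _))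
  set Cs : ℝ := ∑ m ∈ Finset.range (N0 + 1), |c m| with hCsdef
  have hCs_le : ∀ m, m ≤ N0 → |c m| ≤ Cs := fun m hm =>
    Finset.single_le_sum (f := fun m => |c m|) (fun i _ => abs_nonneg _)
      (Finset.mem_range.mpr (by omega))
  have hCs0 : 0 ≤ Cs := Finset.sum_nonneg (fun i _ => abs_nonneg _)
  set K : ℝ := Sb * Cs / c N0 with hKdef
  have hK0 : 0 ≤ K := div_nonneg (mul_nonneg hSb0 hCs0) (hcpos N0 le_rfl).le
  rw [Metric.tendsto_atTop]
  intro ε hε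
  obtain ⟨J, hJ⟩ := ((tendsto_sum_nat_add D).eventually_lt_const
    (show (0:ℝ) < ε / 4 by linarith)).exists
  have hDJsum : Summable (fun i => D (i + J)) := (summable_nat_add_iff J).mpr hD
  have hbJsum : Summable (fun i => |b (i + J)|) := (summable_nat_add_iff J).mpr hb_abs
  set P : ℝ := ∑ j ∈ Finset.range J, b j with hPdef
  set T : ℝ := ∑' i, b (i + J) with hTdef
  have hPT : P + T = ∑' n, b n := Summable.sum_add_tsum_nat_add J hb
  have hT : |T| ≤ ε / 4 := by
    have h1 : |T| ≤ ∑' i, |b (i + J)| := by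
      have := norm_tsum_le_tsum_norm (f := fun i => b (i + J)) (by simpa using hbJsum)
      simpa [Real.norm_eq_abs] using this
    have h2 : ∑' i, |b (i + J)| ≤ ∑' i, D (i + J) :=
      Summable.tsum_le_tsum (fun i => hDb _) hbJsum hDJsum
    linarith [hJ]
  have hhead : Filter.Tendsto (fun n => ∑ j ∈ Finset.range J, b j * (c (n - j) / c n))
      Filter.atTop (nhds P) := by
    have h1 : Filter.Tendsto (fun n => ∑ j ∈ Finset.range J, b j * (c (n - j) / c n))
        Filter.atTop (nhds (∑ j ∈ Finset.range J, b j * 1)) :=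
      tendsto_finset_sum _ (fun j _ => (ratio_tendsto c N0 hcpos hratio j).const_mul (b j))
    simpa using h1
  obtain ⟨N1, hN1⟩ := Metric.tendsto_atTop.mp hhead (ε / 4) (by linarith)
  have hφ : Filter.Tendsto (fun n => (N0 : ℝ) * (K * (r / q) ^ (n - N0)))
      Filter.atTop (nhds 0) := by
    have h1 : Filter.Tendsto (fun n : ℕ => (r / q) ^ n) Filter.atTop (nhds 0) :=
      tendsto_pow_atTop_nhds_zero_of_lt_one (div_nonneg hr0.le hq0.le)
        ((div_lt_one hq0).mpr hrq)
    have h2 := (((h1.comp (tendsto_sub_atTop_nat N0)).const_mul K).const_mul (N0 : ℝ))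
    simpa using h2
  obtain ⟨N2, hN2⟩ := Metric.tendsto_atTop.mp hφ (ε / 4) (by linarith)
  refine ⟨max (max N1 N2) (N0 + J + 1), fun n hn => ?_⟩
  have hn1 : N1 ≤ n := le_trans (le_max_left _ _) (le_trans (le_max_left _ _) hn)
  have hn2 : N2 ≤ n := le_trans (le_max_right _ _) (le_trans (le_max_left _ _) hn)
  have hn3 : N0 + J + 1 ≤ n := le_trans (le_max_right _ _) hn
  have hnN0 : N0 ≤ n := by omega
  have hcn : 0 < c n := hcpos n hnN0
  set s : ℕ := n + 1 - N0 with hsdef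
  have hJs : J ≤ s := by omega
  have hsn : s ≤ n + 1 := by omega
  have hsplit : ∑ j ∈ Finset.range (n + 1), b j * (c (n - j) / c n)
      = (∑ j ∈ Finset.range J, b j * (c (n - j) / c n))
        + (∑ j ∈ Finset.Ico J s, b j * (c (n - j) / c n))
        + (∑ j ∈ Finset.Ico s (n + 1), b j * (c (n - j) / c n)) := by
    rw [add_assoc, Finset.sum_Ico_consecutive _ hJs hsn,
      Finset.range_eq_Ico, Finset.range_eq_Ico, Finset.sum_Ico_consecutive _ (Nat.zero_le J) (by omega),
      ← Finset.range_eq_Ico]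
  have hmid : |∑ j ∈ Finset.Ico J s, b j * (c (n - j) / c n)| ≤ ε / 4 := by
    have hterm : ∀ j ∈ Finset.Ico J s, |b j * (c (n - j) / c n)| ≤ D j := by
      intro j hj
      rw [Finset.mem_Ico] at hj
      have hjle : j ≤ n - N0 := by omega
      have hρpos : 0 < c (n - j) / c n := div_pos (hcpos (n - j) (by omega)) hcn
      have hρr : c (n - j) / c n ≤ r ^ j := (div_le_iff₀ hcn).mpr (hub n j hnN0 hjle)
      rw [abs_mul, abs_of_pos hρpos]
      have h1 : |b j| * (c (n - j) / c n) ≤ |b j| * r ^ j :=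
        mul_le_mul_of_nonneg_left hρr (abs_nonneg _)
      have h2 : 0 ≤ |b j| := abs_nonneg _
      simp only [hDdef]; linarith
    calc |∑ j ∈ Finset.Ico J s, b j * (c (n - j) / c n)|
        ≤ ∑ j ∈ Finset.Ico J s, |b j * (c (n - j) / c n)| := Finset.abs_sum_le_sum_abs _ _
      _ ≤ ∑ j ∈ Finset.Ico J s, D j := Finset.sum_le_sum hterm
      _ = ∑ i ∈ Finset.range (s - J), D (J + i) := Finset.sum_Ico_eq_sum_range _ _ _
      _ ≤ ∑' i, D (i + J) := by
          simp_rw [add_comm J]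
          exact Summable.sum_le_tsum _ (fun i _ => hDnonneg _) hDJsum
      _ ≤ ε / 4 := hJ.le
  have htl : |∑ j ∈ Finset.Ico s (n + 1), b j * (c (n - j) / c n)|
      ≤ (N0 : ℝ) * (K * (r / q) ^ (n - N0)) := by
    have hterm : ∀ j ∈ Finset.Ico s (n + 1), |b j * (c (n - j) / c n)|
        ≤ K * (r / q) ^ (n - N0) := by
      intro j hj
      rw [Finset.mem_Ico] at hj
      have hnj : n - j ≤ N0 := by omega
      have hjk : n - N0 ≤ j := by omega
      have e1 : |b j| * q ^ (n - N0) ≤ Sb := by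
        have hp : q ^ (n - N0) ≤ q ^ j := pow_le_pow_right₀ hq.le hjk
        have h0 := hbj j
        nlinarith [abs_nonneg (b j)]
      have e2 : |c (n - j)| ≤ Cs := hCs_le _ hnj
      have e3 : c N0 ≤ r ^ (n - N0) * c n := hlb n hnN0
      have hqk : (0:ℝ) < q ^ (n - N0) := pow_pos hq0 _
      have hrk : (0:ℝ) < r ^ (n - N0) := pow_pos hr0 _
      have hcN0 : 0 < c N0 := hcpos N0 le_rfl
      have hmain : |b j| * |c (n - j)| * (c N0 * q ^ (n - N0))
          ≤ Sb * Cs * r ^ (n - N0) * c n := by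
        calc |b j| * |c (n - j)| * (c N0 * q ^ (n - N0))
            = (|b j| * q ^ (n - N0)) * |c (n - j)| * c N0 := by ring
          _ ≤ (Sb * Cs) * c N0 := by
              apply mul_le_mul_of_nonneg_right _ hcN0.le
              exact mul_le_mul e1 e2 (abs_nonneg _) hSb0
          _ ≤ (Sb * Cs) * (r ^ (n - N0) * c n) :=
              mul_le_mul_of_nonneg_left e3 (mul_nonneg hSb0 hCs0)
          _ = Sb * Cs * r ^ (n - N0) * c n := by ring
      rw [abs_mul, abs_div, abs_of_pos hcn]
      rw [show |b j| * (|c (n - j)| / c n) = |b j| * |c (n - j)| / c n by ring,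
        show K * (r / q) ^ (n - N0) = Sb * Cs * r ^ (n - N0) / (c N0 * q ^ (n - N0)) by
          rw [hKdef, div_pow]; ring]
      exact (div_le_div_iff₀ hcn (by positivity)).mpr hmain
    calc |∑ j ∈ Finset.Ico s (n + 1), b j * (c (n - j) / c n)|
        ≤ ∑ j ∈ Finset.Ico s (n + 1), |b j * (c (n - j) / c n)| :=
          Finset.abs_sum_le_sum_abs _ _
      _ ≤ ∑ _j ∈ Finset.Ico s (n + 1), K * (r / q) ^ (n - N0) := Finset.sum_le_sum hterm
      _ = ((n + 1 - s : ℕ) : ℝ) * (K * (r / q) ^ (n - N0)) := by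
          rw [Finset.sum_const, Nat.card_Ico, nsmul_eq_mul]
      _ ≤ (N0 : ℝ) * (K * (r / q) ^ (n - N0)) := by
          have hcard : n + 1 - s ≤ N0 := by omega
          exact mul_le_mul_of_nonneg_right (Nat.cast_le.mpr hcard) (by positivity)
  have hheadn : |(∑ j ∈ Finset.range J, b j * (c (n - j) / c n)) - P| < ε / 4 := by
    have h0 := hN1 n hn1
    rwa [Real.dist_eq] at h0
  have htln : (N0 : ℝ) * (K * (r / q) ^ (n - N0)) < ε / 4 := by
    have h0 := hN2 n hn2
    rw [Real.dist_eq, sub_zero, abs_of_nonneg (by positivity)] at h0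
    exact h0
  rw [Real.dist_eq, hsplit, ← hPT]
  set x1 := (∑ j ∈ Finset.range J, b j * (c (n - j) / c n)) - P with hx1
  set x2 := ∑ j ∈ Finset.Ico J s, b j * (c (n - j) / c n) with hx2
  set x3 := ∑ j ∈ Finset.Ico s (n + 1), b j * (c (n - j) / c n) with hx3
  have hre : (∑ j ∈ Finset.range J, b j * (c (n - j) / c n)) + x2 + x3 - (P + T)
      = x1 + x2 + (x3 + -T) := by rw [hx1]; ring
  rw [hre]
  calc |x1 + x2 + (x3 + -T)| ≤ |x1 + x2| + |x3 + -T| := abs_add_le _ _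
    _ ≤ |x1| + |x2| + (|x3| + |-T|) := by
        have g1 := abs_add_le x1 x2
        have g2 := abs_add_le x3 (-T)
        linarith
    _ < ε := by
        rw [abs_neg]
        have h3 : |x3| ≤ (N0 : ℝ) * (K * (r / q) ^ (n - N0)) := htl
        linarith

noncomputable section

/-- `R ∈ RT1`: coefficients eventually positive and `r(n-1)/r(n) → 1`. -/
def RT1 (r : ℕ → ℝ) : Prop :=
  (∀ᶠ n in Filter.atTop, 0 < r n) ∧
    Filter.Tendsto (fun n => r (n - 1) / r n) Filter.atTop (nhds 1)

/-- The coefficients are all natural numbers. -/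
def IsNatSeries (r : ℕ → ℝ) : Prop := ∀ n, ∃ k : ℕ, r n = (k : ℝ)

/-- Members of `RT1` with natural-number coefficients. -/
def RTN1 (r : ℕ → ℝ) : Prop := RT1 r ∧ IsNatSeries r

/-- Coefficient sequence of `R(x^d)`. -/
def substPow (d : ℕ) (r : ℕ → ℝ) : ℕ → ℝ := fun n => if d ∣ n then r (n / d) else 0

/-- Cauchy product of coefficient sequences. -/
def cauchy (a b : ℕ → ℝ) : ℕ → ℝ := fun n => ∑ j ∈ Finset.range (n + 1), a j * b (n - j)

/-- Schur's Tauberian Theorem: if `B` has radius of convergence `> 1`, `B(1) > 0` and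
`C ∈ RT1`, then the coefficients of `A = B·C` satisfy `a(n) ~ B(1)·c(n)`. -/
theorem schur_tauberian (b c : ℕ → ℝ)
    (hrad : ∃ q : ℝ, 1 < q ∧ Summable (fun n => |b n| * q ^ n))
    (hpos : 0 < ∑' n, b n) (hc : RT1 c) :
    Filter.Tendsto (fun n => cauchy b c n / ((∑' m, b m) * c n)) Filter.atTop (nhds 1) := by
  obtain ⟨q, hq, hsumq⟩ := hrad
  have hq0 : (0:ℝ) < q := lt_trans one_pos hq
  set r : ℝ := Real.sqrt q with hrdef
  have hrsq : r * r = q := Real.mul_self_sqrt hq0.le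
  have hr1 : 1 < r := by nlinarith [Real.sqrt_nonneg q]
  have hr0 : (0:ℝ) < r := lt_trans one_pos hr1
  have hrq : r < q := by nlinarith
  have hb_abs : Summable (fun n => |b n|) := by
    apply Summable.of_nonneg_of_le (fun n => abs_nonneg _) _ hsumq
    intro n
    have h1 : (1:ℝ) ≤ q ^ n := one_le_pow₀ hq.le
    nlinarith [abs_nonneg (b n)]
  have hb : Summable b := hb_abs.of_abs
  have hbr : Summable (fun n => |b n| * r ^ n) := by
    apply Summable.of_nonneg_of_le (fun n => by positivity) _ hsumq
    intro n
    have h1 : r ^ n ≤ q ^ n := pow_le_pow_left₀ hr0.le hrq.le n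
    nlinarith [abs_nonneg (b n)]
  have hmem : ∀ᶠ n in Filter.atTop, c (n - 1) / c n ∈ Set.Ioo (1/r) r :=
    hc.2 (Ioo_mem_nhds (by rw [div_lt_one hr0]; exact hr1) hr1)
  obtain ⟨N0, hN0⟩ := (hc.1.and hmem).exists_forall_of_atTop
  have hcpos : ∀ n, N0 ≤ n → 0 < c n := fun n hn => (hN0 n hn).1
  have hcr : ∀ n, N0 ≤ n → 0 < c n ∧ c (n - 1) ≤ r * c n ∧ c n ≤ r * c (n - 1) := by
    intro n hn
    obtain ⟨hpc, hio⟩ := hN0 n hn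
    refine ⟨hpc, le_of_lt ((div_lt_iff₀ hpc).mp hio.2), ?_⟩
    have h1 : 1 / r < c (n - 1) / c n := hio.1
    rw [div_lt_div_iff₀ hr0 hpc] at h1
    linarith
  have hkey := ratio_pow_bound c r hr1 N0 hcr
  have hub : ∀ n j, N0 ≤ n → j ≤ n - N0 → c (n - j) ≤ r ^ j * c n := by
    intro n j hn hj
    have h1 : N0 ≤ n - j := by omega
    have h2 := (hkey (n - j) n h1 (by omega)).1
    have h3 : n - (n - j) = j := by omega
    rwa [h3] at h2
  have hlb : ∀ n, N0 ≤ n → c N0 ≤ r ^ (n - N0) * c n := fun n hn => (hkey N0 n le_rfl hn).1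
  have hg := schur_key b c q r hq hr1 hrq hsumq hb_abs hb hbr N0 hcpos hub hlb hc.2
  have hfinal := hg.div_const (∑' n, b n)
  rw [div_self (ne_of_gt hpos)] at hfinal
  apply Filter.Tendsto.congr' _ hfinal
  filter_upwards [Filter.eventually_ge_atTop N0] with n hn
  have hcn : c n ≠ 0 := (hcpos n hn).ne'
  have h1 : (∑ j ∈ Finset.range (n + 1), b j * (c (n - j) / c n))
      = (∑ j ∈ Finset.range (n + 1), b j * c (n - j)) / c n := by
    rw [Finset.sum_div]
    exact Finset.sum_congr rfl (fun j _ => (mul_div_assoc _ _ _).symm)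
  show (∑ j ∈ Finset.range (n + 1), b j * (c (n - j) / c n)) / (∑' n, b n)
      = cauchy b c n / ((∑' m, b m) * c n)
  rw [h1, show cauchy b c n = ∑ j ∈ Finset.range (n + 1), b j * c (n - j) from rfl,
    div_div, mul_comm (c n) (∑' n, b n)]
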